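/- Let X and A be compact metric spaces with A nonempty. Let (Q_n) be a sequence of continuous real-valued functions on X × A that is uniformly bounded, and let Q : X × A → ℝ be such that Q_n converges to Q continuously, i.e. for every sequence (x_n, a_n) in X × A converging to (x, a) one has Q_n(x_n, a_n) → Q(x, a). For each n let ν_n be a Borel probability measure on X × A with ν_n(A_n) = 1, where A_n = {(x, a) : Q_n(x, a) = min_{b ∈ A} Q_n(x, b)}. If ν_n converges weakly to a Borel probability measure ν on X × A, then ν(A∞) = 1, where A∞ = {(x, a) : Q(x, a) = min_{b ∈ A} Q(x, b)}. -/

import Mathlib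

open Filter MeasureTheory

/-- Diagonal lemma: continuous convergence along a strictly monotone subsequence of indices. -/
lemma aux_keyA {Y : Type*} [MetricSpace Y] {Q : ℕ → Y → ℝ} {Qlim : Y → ℝ}
    (hcc : ∀ (p : ℕ → Y) (q : Y), Tendsto p atTop (nhds q) →
      Tendsto (fun n => Q n (p n)) atTop (nhds (Qlim q)))
    {m : ℕ → ℕ} (hm : StrictMono m) {y : ℕ → Y} {q : Y}
    (hy : Tendsto y atTop (nhds q)) :
    Tendsto (fun k => Q (m k) (y k)) atTop (nhds (Qlim q)) := by
  classical
  set z : ℕ → Y := fun j => if h : ∃ k, m k = j then y h.choose else q with hz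
  have hzm : ∀ k, z (m k) = y k := by
    intro k
    have h : ∃ k', m k' = m k := ⟨k, rfl⟩
    simp only [hz, dif_pos h]
    congr 1
    exact hm.injective h.choose_spec
  have hztend : Tendsto z atTop (nhds q) := by
    rw [tendsto_atTop_nhds]
    intro U hqU hU
    obtain ⟨K, hK⟩ := (tendsto_atTop_nhds.mp hy) U hqU hU
    refine ⟨m K + 1, fun j hj => ?_⟩
    by_cases h : ∃ k, m k = j
    · have hzj : z j = y h.choose := dif_pos h
      rw [hzj]
      apply hK
      have h1 : m K < m h.choose := by rw [h.choose_spec]; omega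
      exact (hm.lt_iff_lt.mp h1).le
    · have hzj : z j = q := dif_neg h
      rw [hzj]; exact hqU
  have h2 := (hcc z q hztend).comp hm.tendsto_atTop
  refine Tendsto.congr (fun k => ?_) h2
  simp only [Function.comp_apply, hzm]

/-- Continuity of the fiberwise infimum of a continuous bounded function. -/
lemma aux_infCont {X A : Type*} [MetricSpace X] [MetricSpace A]
    [CompactSpace X] [CompactSpace A] [Nonempty A]
    {F : X × A → ℝ} (hF : Continuous F) {M : ℝ} (hM : ∀ p, |F p| ≤ M) :
    Continuous fun x => ⨅ b : A, F (x, b) := by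
  have hbdd : ∀ x : X, BddBelow (Set.range fun b : A => F (x, b)) := by
    intro x
    refine ⟨-M, ?_⟩
    rintro r ⟨b, rfl⟩
    linarith [(abs_le.mp (hM (x, b))).1]
  rw [Metric.continuous_iff]
  intro x ε hε
  have huc := CompactSpace.uniformContinuous_of_continuous hF
  rw [Metric.uniformContinuous_iff] at huc
  obtain ⟨δ, hδ, hdist⟩ := huc (ε/2) (by linarith)
  refine ⟨δ, hδ, fun y hy => ?_⟩
  have key : ∀ x' y' : X, dist y' x' < δ →
      (⨅ b : A, F (y', b)) ≤ (⨅ b : A, F (x', b)) + ε/2 := by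
    intro x' y' hxy
    have hb : ∀ b : A, (⨅ b : A, F (y', b)) - ε/2 ≤ F (x', b) := by
      intro b
      have hd : dist ((y', b) : X × A) (x', b) < δ := by
        rw [Prod.dist_eq]
        simp only [dist_self]
        exact max_lt hxy hδ
      have h1 := hdist hd
      rw [Real.dist_eq] at h1
      have h2 : (⨅ b : A, F (y', b)) ≤ F (y', b) := ciInf_le (hbdd y') b
      have := (abs_lt.mp h1).2
      linarith
    linarith [le_ciInf hb]
  have h1 := key x y hy
  have h2 := key y x (by rwa [dist_comm] at hy)
  rw [Real.dist_eq, abs_lt]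
  constructor <;> linarith

theorem stmt14 {X A : Type*} [MetricSpace X] [CompactSpace X]
    [MetricSpace A] [CompactSpace A] [Nonempty A]
    [MeasurableSpace (X × A)] [OpensMeasurableSpace (X × A)]
    (Q : ℕ → X × A → ℝ) (Qlim : X × A → ℝ)
    (hQcont : ∀ n, Continuous (Q n))
    (hbdd : ∃ M : ℝ, ∀ n p, |Q n p| ≤ M)
    (hcc : ∀ (p : ℕ → X × A) (q : X × A), Tendsto p atTop (nhds q) →
      Tendsto (fun n => Q n (p n)) atTop (nhds (Qlim q)))
    (ν : ℕ → ProbabilityMeasure (X × A)) (νlim : ProbabilityMeasure (X × A))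
    (hν : ∀ n, (ν n : Measure (X × A)) {p | Q n p = ⨅ b : A, Q n (p.1, b)} = 1)
    (hw : Tendsto ν atTop (nhds νlim)) :
    (νlim : Measure (X × A)) {p | Qlim p = ⨅ b : A, Qlim (p.1, b)} = 1 := by
  classical
  obtain ⟨M, hM⟩ := hbdd
  -- Qlim is bounded
  have hQlim_bd : ∀ p, |Qlim p| ≤ M := by
    intro p
    have h1 : Tendsto (fun n => Q n p) atTop (nhds (Qlim p)) :=
      hcc (fun _ => p) p tendsto_const_nhds
    exact le_of_tendsto h1.abs (Eventually.of_forall fun n => hM n p)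
  -- Qlim is continuous
  have hQlimc : Continuous Qlim := by
    apply SeqContinuous.continuous
    intro x q hx
    have hpt : ∀ k : ℕ, ∀ᶠ n in atTop, |Q n (x k) - Qlim (x k)| < 1/(k+1 : ℝ) := by
      intro k
      have h1 : Tendsto (fun n => Q n (x k)) atTop (nhds (Qlim (x k))) :=
        hcc (fun _ => x k) _ tendsto_const_nhds
      have h2 : Tendsto (fun n => |Q n (x k) - Qlim (x k)|) atTop (nhds 0) := by
        have h3 := h1.sub (tendsto_const_nhds :
          Tendsto (fun _ : ℕ => Qlim (x k)) atTop (nhds (Qlim (x k))))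
        simpa using h3.abs
      exact h2.eventually (gt_mem_nhds (by positivity))
    obtain ⟨m, hm, hmP⟩ := Filter.extraction_forall_of_eventually hpt
    have h1 : Tendsto (fun k => Q (m k) (x k)) atTop (nhds (Qlim q)) := aux_keyA hcc hm hx
    have h2 : Tendsto (fun k => Q (m k) (x k) - Qlim (x k)) atTop (nhds 0) := by
      apply squeeze_zero_norm (fun k => (hmP k).le)
      exact tendsto_one_div_add_atTop_nhds_zero_nat
    have h3 := h1.sub h2
    simpa [Function.comp_def] using h3
  -- bddBelow facts
  have hbddb : ∀ x : X, BddBelow (Set.range fun b : A => Qlim (x, b)) := by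
    intro x; refine ⟨-M, ?_⟩; rintro r ⟨b, rfl⟩; linarith [(abs_le.mp (hQlim_bd (x, b))).1]
  have hbddn : ∀ (n : ℕ) (x : X), BddBelow (Set.range fun b : A => Q n (x, b)) := by
    intro n x; refine ⟨-M, ?_⟩; rintro r ⟨b, rfl⟩; linarith [(abs_le.mp (hM n (x, b))).1]
  set h : X → ℝ := fun x => ⨅ b : A, Qlim (x, b) with hh
  have hhc : Continuous h := aux_infCont hQlimc hQlim_bd
  have hgle : ∀ p : X × A, h p.1 ≤ Qlim p := by
    intro p
    have := ciInf_le (hbddb p.1) p.2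
    simpa using this
  set g : X × A → ℝ := fun p => Qlim p - h p.1 with hg
  have hgc : Continuous g := hQlimc.sub (hhc.comp continuous_fst)
  have hg0 : ∀ p, 0 ≤ g p := fun p => sub_nonneg.mpr (hgle p)
  let G : BoundedContinuousFunction (X × A) ℝ := BoundedContinuousFunction.mkOfCompact ⟨g, hgc⟩
  have hGg : ∀ p, G p = g p := fun p => rfl
  -- key : eventually g ≤ δ on the argmin sets
  have key : ∀ δ : ℝ, 0 < δ →
      ∀ᶠ n in atTop, ∀ p : X × A, Q n p = (⨅ b : A, Q n (p.1, b)) → g p ≤ δ := by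
    intro δ hδ
    by_contra hcon
    rw [Filter.not_eventually] at hcon
    simp only [not_forall, not_le] at hcon
    obtain ⟨φ, hφ, hφP⟩ := Filter.extraction_of_frequently_atTop hcon
    choose p hp1 hp2 using hφP
    obtain ⟨q, ψ, hψ, hq⟩ := CompactSpace.tendsto_subseq p
    have hm : StrictMono (fun k => φ (ψ k)) := hφ.comp hψ
    have hL : Tendsto (fun k => Q (φ (ψ k)) (p (ψ k))) atTop (nhds (Qlim q)) :=
      aux_keyA hcc hm hq
    have hcontb : Continuous (fun b : A => Qlim (q.1, b)) :=
      hQlimc.comp (continuous_const.prodMk continuous_id)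
    obtain ⟨b, -, hb⟩ := isCompact_univ.exists_isMinOn Set.univ_nonempty hcontb.continuousOn
    have hhq : h q.1 = Qlim (q.1, b) :=
      le_antisymm (ciInf_le (hbddb q.1) b) (le_ciInf fun b' => (isMinOn_iff.mp hb) b' (Set.mem_univ b'))
    have hfst : Tendsto (fun k => ((p (ψ k)).1, b)) atTop (nhds (q.1, b)) := by
      rw [nhds_prod_eq]
      exact Tendsto.prodMk (((continuous_fst : Continuous (Prod.fst : X × A → X)).tendsto q).comp hq)
        (tendsto_const_nhds : Tendsto (fun _ : ℕ => b) atTop (nhds b))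
    have hc : Tendsto (fun k => Q (φ (ψ k)) ((p (ψ k)).1, b)) atTop (nhds (Qlim (q.1, b))) :=
      aux_keyA hcc hm hfst
    have hle : ∀ k, Q (φ (ψ k)) (p (ψ k)) ≤ Q (φ (ψ k)) ((p (ψ k)).1, b) := by
      intro k
      rw [hp1 (ψ k)]
      exact ciInf_le (hbddn (φ (ψ k)) (p (ψ k)).1) b
    have hQq : Qlim q ≤ Qlim (q.1, b) := le_of_tendsto_of_tendsto' hL hc hle
    have hgq : g q = 0 := by
      have : g q ≤ 0 := by simp only [hg]; rw [hhq]; linarith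
      linarith [hg0 q]
    have htg : Tendsto (fun k => g (p (ψ k))) atTop (nhds (g q)) := (hgc.tendsto q).comp hq
    have hδq : δ ≤ g q := ge_of_tendsto htg (Eventually.of_forall fun k => (hp2 (ψ k)).le)
    rw [hgq] at hδq
    linarith
  -- weak convergence of integrals
  have hint : Tendsto (fun n => ∫ p, G p ∂(ν n : Measure (X × A))) atTop
      (nhds (∫ p, G p ∂(νlim : Measure (X × A)))) :=
    ProbabilityMeasure.tendsto_iff_forall_integral_tendsto.mp hw G
  have hzero : ∫ p, g p ∂(νlim : Measure (X × A)) = 0 := by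
    have h0le : (0:ℝ) ≤ ∫ p, g p ∂(νlim : Measure (X × A)) := integral_nonneg hg0
    have hled : ∀ δ : ℝ, 0 < δ → ∫ p, g p ∂(νlim : Measure (X × A)) ≤ δ := by
      intro δ hδ
      refine le_of_tendsto hint ?_
      filter_upwards [key δ hδ] with n hn
      have hclosed : IsClosed {p : X × A | Q n p = ⨅ b : A, Q n (p.1, b)} :=
        isClosed_eq (hQcont n) ((aux_infCont (hQcont n) (hM n)).comp continuous_fst)
      have hcompl : (ν n : Measure (X × A)) {p : X × A | Q n p = ⨅ b : A, Q n (p.1, b)}ᶜ = 0 :=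
        (prob_compl_eq_zero_iff hclosed.measurableSet).mpr (hν n)
      have hae : ∀ᵐ p ∂(ν n : Measure (X × A)), G p ≤ δ := by
        rw [ae_iff]
        refine measure_mono_null ?_ hcompl
        intro p hp
        simp only [Set.mem_setOf_eq, not_le] at hp
        simp only [Set.mem_compl_iff, Set.mem_setOf_eq]
        intro heq
        exact absurd (hn p heq) (not_le.mpr (by rw [← hGg p]; exact hp))
      calc ∫ p, G p ∂(ν n : Measure (X × A))
          ≤ ∫ _, δ ∂(ν n : Measure (X × A)) :=
            integral_mono_ae (G.integrable _) (integrable_const δ) hae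
        _ = δ := by simp
    have : ∫ p, g p ∂(νlim : Measure (X × A)) ≤ 0 := by
      refine le_of_forall_pos_le_add fun ε hε => ?_
      simpa using hled ε hε
    linarith
  have haeg : g =ᵐ[(νlim : Measure (X × A))] 0 :=
    (integral_eq_zero_iff_of_nonneg hg0 (G.integrable _)).mp hzero
  have hclosedInf : IsClosed {p : X × A | Qlim p = ⨅ b : A, Qlim (p.1, b)} :=
    isClosed_eq hQlimc (hhc.comp continuous_fst)
  rw [← prob_compl_eq_zero_iff hclosedInf.measurableSet]
  rw [Filter.EventuallyEq, ae_iff] at haeg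
  refine measure_mono_null ?_ haeg
  intro p hp
  simp only [Set.mem_compl_iff, Set.mem_setOf_eq] at hp ⊢
  simp only [Pi.zero_apply]
  intro h0
  apply hp
  have : Qlim p - h p.1 = 0 := h0
  simp only [hh] at this
  linarith [sub_eq_zero.mp this]
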